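/- arXiv:1810.09207 — 2 statements merged into one kernel-verified Lean document; each statement's English description precedes it below -/
import Mathlib

section
/- Let X be an ℝ^d-valued random vector whose distribution is α-symmetric for some α ∈ (0,2], i.e., for every u ∈ ℝ^d the linear combination u⬝X has the same distribution as ‖u‖_α · X₁, where X₁ is the first coordinate of X. Then the halfspace depth of x with respect to the law of X equals F(inf_{u ≠ 0} (u⬝x)/‖u‖_α), where F is the cumulative distribution function of X₁, provided F is continuous. -/
open MeasureTheory

/-- The `ℓ^α` quasi-norm `(∑ᵢ |uᵢ|^α)^(1/α)` on `ℝ^d`. -/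
noncomputable def alphaNorm {d : ℕ} (α : ℝ) (u : Fin d → ℝ) : ℝ :=
    (∑ i, |u i| ^ α) ^ (1 / α)

/-- The halfspace (Tukey) depth of `x` with respect to a measure `P` on `ℝ^d`. -/
noncomputable def halfspaceDepth {d : ℕ} (x : Fin d → ℝ) (P : Measure (Fin d → ℝ)) : ℝ :=
    ⨅ u : {u : Fin d → ℝ // u ≠ 0}, (P {z | ∑ i, u.1 i * z i ≤ ∑ i, u.1 i * x i}).toReal

lemma alphaNorm_pos {d : ℕ} {α : ℝ} (hα₀ : 0 < α) {u : Fin d → ℝ} (hu : u ≠ 0) :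
    0 < alphaNorm α u := by
  have : ∃ j, u j ≠ 0 := by
    by_contra h
    push_neg at h
    exact hu (funext h)
  obtain ⟨j, hj⟩ := this
  have hsum : 0 < ∑ i, |u i| ^ α := by
    apply Finset.sum_pos' (fun i _ => Real.rpow_nonneg (abs_nonneg _) _)
    exact ⟨j, Finset.mem_univ j, Real.rpow_pos_of_pos (abs_pos.2 hj) _⟩
  exact Real.rpow_pos_of_pos hsum _

lemma abs_le_alphaNorm {d : ℕ} {α : ℝ} (hα₀ : 0 < α) (u : Fin d → ℝ) (i : Fin d) :
    |u i| ≤ alphaNorm α u := by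
  have h1 : |u i| ^ α ≤ ∑ j, |u j| ^ α :=
    Finset.single_le_sum (f := fun j => |u j| ^ α)
      (fun j _ => Real.rpow_nonneg (abs_nonneg _) _) (Finset.mem_univ i)
  have h2 : (|u i| ^ α) ^ (1 / α) ≤ alphaNorm α u :=
    Real.rpow_le_rpow (Real.rpow_nonneg (abs_nonneg _) _) h1 (by positivity)
  rwa [← Real.rpow_mul (abs_nonneg _), mul_one_div, div_self hα₀.ne',
    Real.rpow_one] at h2

theorem depth_of_alphaSymmetric (d : ℕ) (hd : 1 ≤ d)
    (α : ℝ) (hα₀ : 0 < α) (hα₂ : α ≤ 2)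
    (P : Measure (Fin d → ℝ)) [IsProbabilityMeasure P]
    (hsym : ∀ u : Fin d → ℝ,
      Measure.map (fun z => ∑ i, u i * z i) P
        = Measure.map (fun z => alphaNorm α u * z ⟨0, hd⟩) P)
    (F : ℝ → ℝ) (hFdef : ∀ s, F s = (P {z | z ⟨0, hd⟩ ≤ s}).toReal)
    (hF : Continuous F) (x : Fin d → ℝ) :
    halfspaceDepth x P
      = F (⨅ u : {u : Fin d → ℝ // u ≠ 0}, (∑ i, u.1 i * x i) / alphaNorm α u.1) := by
  -- measurability facts
  have hmeas₀ : Measurable (fun z : Fin d → ℝ => z ⟨0, hd⟩) := measurable_pi_apply _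
  -- key: for each nonzero u, the halfspace mass equals F of the normalized inner product
  have key : ∀ u : {u : Fin d → ℝ // u ≠ 0},
      (P {z | ∑ i, u.1 i * z i ≤ ∑ i, u.1 i * x i}).toReal
        = F ((∑ i, u.1 i * x i) / alphaNorm α u.1) := by
    rintro ⟨u, hu⟩
    set N : ℝ := alphaNorm α u with hN
    have hNpos : 0 < N := alphaNorm_pos hα₀ hu
    set c : ℝ := ∑ i, u i * x i with hc
    have hT : Measurable (fun z : Fin d → ℝ => ∑ i, u i * z i) := by
      apply Finset.measurable_sum
      intro i _
      exact (measurable_pi_apply i).const_mul _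
    have hS : Measurable (fun z : Fin d → ℝ => N * z ⟨0, hd⟩) := hmeas₀.const_mul _
    have h1 : P {z | ∑ i, u i * z i ≤ c} = P {z | N * z ⟨0, hd⟩ ≤ c} := by
      have e1 := congrArg (fun μ => μ (Set.Iic c)) (hsym u)
      simp only [Measure.map_apply hT measurableSet_Iic,
        Measure.map_apply hS measurableSet_Iic] at e1
      exact e1.trans (Measure.map_apply hS measurableSet_Iic)
    have h2 : {z : Fin d → ℝ | N * z ⟨0, hd⟩ ≤ c} = {z | z ⟨0, hd⟩ ≤ c / N} := by
      ext z
      simp only [Set.mem_setOf_eq, le_div_iff₀ hNpos, mul_comm]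
    rw [h1, h2, hFdef]
  -- monotonicity of F
  have hFmono : Monotone F := by
    intro s t hst
    rw [hFdef, hFdef]
    apply ENNReal.toReal_mono (measure_ne_top P _)
    exact measure_mono (fun z hz => le_trans hz hst)
  -- the index type is nonempty
  have hne : Nonempty {u : Fin d → ℝ // u ≠ 0} := by
    refine ⟨⟨fun _ => 1, ?_⟩⟩
    intro h
    have := congrFun h ⟨0, hd⟩
    norm_num at this
  -- boundedness below of the normalized inner products
  have hbdd : BddBelow (Set.range fun u : {u : Fin d → ℝ // u ≠ 0} =>
      (∑ i, u.1 i * x i) / alphaNorm α u.1) := by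
    refine ⟨-∑ i, |x i|, ?_⟩
    rintro _ ⟨⟨u, hu⟩, rfl⟩
    have hNpos : 0 < alphaNorm α u := alphaNorm_pos hα₀ hu
    rw [le_div_iff₀ hNpos, neg_mul]
    rw [neg_le]
    calc -∑ i, u i * x i ≤ |∑ i, u i * x i| := neg_le_abs _
      _ ≤ ∑ i, |u i * x i| := Finset.abs_sum_le_sum_abs _ _
      _ ≤ ∑ i, alphaNorm α u * |x i| := by
          apply Finset.sum_le_sum
          intro i _
          rw [abs_mul]
          exact mul_le_mul_of_nonneg_right (abs_le_alphaNorm hα₀ u i) (abs_nonneg _)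
      _ = (∑ i, |x i|) * alphaNorm α u := by rw [← Finset.mul_sum, mul_comm]
  -- conclude
  rw [halfspaceDepth]
  simp_rw [key]
  exact (Monotone.map_ciInf_of_continuousAt hF.continuousAt hFmono hbdd).symm
end

section
/- Let X be an ℝ^d-valued random vector whose distribution is α-symmetric for some α ∈ (0,1] (u⬝X has the same distribution as ‖u‖_α X₁ for all u), and suppose the CDF F of X₁ is continuous. Then the halfspace depth of x with respect to the law of X equals F(-‖x‖_∞) for all x ∈ ℝ^d; in particular this value does not depend on α. -/
open MeasureTheory

private lemma real_rpow_add_le {a b α : ℝ} (ha : 0 ≤ a) (hb : 0 ≤ b)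
    (hα₀ : 0 < α) (hα₁ : α ≤ 1) : (a + b) ^ α ≤ a ^ α + b ^ α := by
  have h := NNReal.rpow_add_le_add_rpow a.toNNReal b.toNNReal hα₀.le hα₁
  have h2 : ((a.toNNReal + b.toNNReal : NNReal) : ℝ) ^ α
      ≤ ((a.toNNReal : ℝ)) ^ α + ((b.toNNReal : ℝ)) ^ α := by
    exact_mod_cast h
  simpa [Real.coe_toNNReal a ha, Real.coe_toNNReal b hb] using h2

private lemma sum_rpow_ge {ι : Type*} (s : Finset ι) (f : ι → ℝ) (hf : ∀ i, 0 ≤ f i)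
    {α : ℝ} (hα₀ : 0 < α) (hα₁ : α ≤ 1) :
    (∑ i ∈ s, f i) ^ α ≤ ∑ i ∈ s, f i ^ α := by
  induction s using Finset.cons_induction with
  | empty => simp [Real.zero_rpow hα₀.ne']
  | cons a s ha ih =>
    rw [Finset.sum_cons, Finset.sum_cons]
    calc (f a + ∑ i ∈ s, f i) ^ α ≤ f a ^ α + (∑ i ∈ s, f i) ^ α :=
          real_rpow_add_le (hf a) (Finset.sum_nonneg fun i _ => hf i) hα₀ hα₁
      _ ≤ f a ^ α + ∑ i ∈ s, f i ^ α := by linarith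

set_option maxHeartbeats 1000000 in
theorem depth_of_alphaSymmetric_eq_F_neg_supnorm (d : ℕ) (hd : 1 ≤ d)
    (α : ℝ) (hα₀ : 0 < α) (hα₁ : α ≤ 1)
    (P : Measure (Fin d → ℝ)) [IsProbabilityMeasure P]
    (hsym : ∀ u : Fin d → ℝ,
      Measure.map (fun z => ∑ i, u i * z i) P
        = Measure.map (fun z => alphaNorm α u * z ⟨0, hd⟩) P)
    (F : ℝ → ℝ) (hFdef : ∀ s, F s = (P {z | z ⟨0, hd⟩ ≤ s}).toReal)
    (hF : Continuous F) (x : Fin d → ℝ) :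
    halfspaceDepth x P = F (-(⨆ i, |x i|)) := by
  haveI : Nonempty (Fin d) := ⟨⟨0, hd⟩⟩
  set S : ℝ := ⨆ i, |x i| with hS
  -- F is monotone
  have hFmono : Monotone F := by
    intro s t hst
    rw [hFdef s, hFdef t]
    exact ENNReal.toReal_mono (measure_ne_top P _)
      (measure_mono fun z hz => le_trans hz hst)
  -- ℓ¹ norm bounded by alphaNorm for u ≠ 0
  have hnormpos : ∀ u : Fin d → ℝ, u ≠ 0 → 0 < alphaNorm α u := by
    intro u hu
    obtain ⟨i, hi⟩ := Function.ne_iff.mp hu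
    apply Real.rpow_pos_of_pos
    have h1 : 0 < |u i| ^ α := Real.rpow_pos_of_pos (abs_pos.mpr hi) α
    have h2 : ∀ j ∈ Finset.univ, 0 ≤ |u j| ^ α := fun j _ =>
      Real.rpow_nonneg (abs_nonneg _) α
    exact Finset.sum_pos' h2 ⟨i, Finset.mem_univ i, h1⟩
  have hl1 : ∀ u : Fin d → ℝ, (∑ i, |u i|) ≤ alphaNorm α u := by
    intro u
    have h1 : (∑ i, |u i|) ^ α ≤ ∑ i, |u i| ^ α :=
      sum_rpow_ge Finset.univ (fun i => |u i|) (fun i => abs_nonneg _) hα₀ hα₁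
    have hnn : 0 ≤ ∑ i, |u i| := Finset.sum_nonneg fun i _ => abs_nonneg _
    have h2 : ((∑ i, |u i|) ^ α) ^ (1/α) ≤ (∑ i, |u i| ^ α) ^ (1/α) :=
      Real.rpow_le_rpow (Real.rpow_nonneg hnn α) h1 (by positivity)
    have h3 : ((∑ i, |u i|) ^ α) ^ (1/α) = ∑ i, |u i| := by
      rw [← Real.rpow_mul hnn, mul_one_div, div_self hα₀.ne', Real.rpow_one]
    rw [← h3]
    exact h2
  -- key formula for each halfspace probability
  have hkey : ∀ u : Fin d → ℝ, u ≠ 0 →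
      (P {z | ∑ i, u i * z i ≤ ∑ i, u i * x i}).toReal
        = F ((∑ i, u i * x i) / alphaNorm α u) := by
    intro u hu
    set c := alphaNorm α u with hc
    have hcpos := hnormpos u hu
    set t := ∑ i, u i * x i with ht
    have hmeas1 : Measurable fun z : Fin d → ℝ => ∑ i, u i * z i :=
      Finset.measurable_sum _ fun i _ => by fun_prop
    have hmeas2 : Measurable fun z : Fin d → ℝ => c * z ⟨0, hd⟩ :=
      by fun_prop
    have e1 : P {z | ∑ i, u i * z i ≤ t}
        = Measure.map (fun z => ∑ i, u i * z i) P (Set.Iic t) := by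
      rw [Measure.map_apply hmeas1 measurableSet_Iic]; rfl
    have e2 : Measure.map (fun z : Fin d → ℝ => c * z ⟨0, hd⟩) P (Set.Iic t)
        = P {z | z ⟨0, hd⟩ ≤ t / c} := by
      rw [Measure.map_apply hmeas2 measurableSet_Iic]
      congr 1
      ext z
      simp only [Set.mem_preimage, Set.mem_Iic, Set.mem_setOf_eq]
      rw [le_div_iff₀ hcpos, mul_comm]
    rw [e1, hsym u, ← hc, e2, hFdef]
  -- lower bound of the (attained) infimum
  have hlb : ∀ u : Fin d → ℝ, u ≠ 0 →
      F (-S) ≤ F ((∑ i, u i * x i) / alphaNorm α u) := by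
    intro u hu
    apply hFmono
    rw [le_div_iff₀ (hnormpos u hu)]
    have hSx : ∀ i, |x i| ≤ S := fun i => le_ciSup (f := fun i => |x i|) (Set.Finite.bddAbove (Set.finite_range _)) i
    have hS0 : 0 ≤ S := le_trans (abs_nonneg _) (hSx ⟨0, hd⟩)
    have h1 : -(∑ i, u i * x i) ≤ (∑ i, |u i|) * S := by
      rw [← Finset.sum_neg_distrib, Finset.sum_mul]
      apply Finset.sum_le_sum
      intro i _
      calc -(u i * x i) ≤ |u i * x i| := neg_le_abs _
        _ = |u i| * |x i| := abs_mul _ _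
        _ ≤ |u i| * S := mul_le_mul_of_nonneg_left (hSx i) (abs_nonneg _)
    have h2 : (∑ i, |u i|) * S ≤ alphaNorm α u * S :=
      mul_le_mul_of_nonneg_right (hl1 u) hS0
    nlinarith
  -- the sup is attained at some index j
  obtain ⟨j, hj⟩ := Finite.exists_max fun i => |x i|
  have hSj : S = |x j| := le_antisymm (ciSup_le hj)
    (le_ciSup (f := fun i => |x i|) (Set.Finite.bddAbove (Set.finite_range _)) j)
  -- witness direction achieving the bound
  set u₀ : Fin d → ℝ := fun i => if i = j then (if 0 ≤ x j then -1 else 1) else 0 with hu₀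
  have hu₀j : u₀ j = if 0 ≤ x j then -1 else 1 := by simp [hu₀]
  have hu₀ne : u₀ ≠ 0 := by
    intro h
    have := congrFun h j
    rw [hu₀j] at this
    split_ifs at this <;> norm_num at this
  have habs : ∀ i, |u₀ i| = if i = j then 1 else 0 := by
    intro i
    by_cases h : i = j <;> simp [hu₀, h] <;> split_ifs <;> norm_num
  have hanorm : alphaNorm α u₀ = 1 := by
    unfold alphaNorm
    have : ∀ i, |u₀ i| ^ α = if i = j then 1 else 0 := by
      intro i
      rw [habs i]
      split_ifs <;> simp [Real.zero_rpow hα₀.ne']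
    simp [this]
  have hdot : ∑ i, u₀ i * x i = -S := by
    rw [hSj]
    rw [Finset.sum_eq_single j]
    · rw [hu₀j]; split_ifs with h
      · rw [abs_of_nonneg h]; ring
      · rw [abs_of_neg (lt_of_not_ge h)]; ring
    · intro b _ hb; simp [hu₀, hb]
    · simp
  unfold halfspaceDepth
  have hval : ∀ u : {u : Fin d → ℝ // u ≠ 0},
      (P {z | ∑ i, u.1 i * z i ≤ ∑ i, u.1 i * x i}).toReal
        = F ((∑ i, u.1 i * x i) / alphaNorm α u.1) := fun u => hkey u.1 u.2
  have hbdd : ∀ u : {u : Fin d → ℝ // u ≠ 0},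
      F (-S) ≤ (P {z | ∑ i, u.1 i * z i ≤ ∑ i, u.1 i * x i}).toReal := by
    intro u; rw [hval u]; exact hlb u.1 u.2
  have hbb : BddBelow (Set.range fun u : {u : Fin d → ℝ // u ≠ 0} =>
      (P {z | ∑ i, u.1 i * z i ≤ ∑ i, u.1 i * x i}).toReal) := by
    refine ⟨F (-S), ?_⟩
    rintro r ⟨u, rfl⟩
    exact hbdd u
  haveI : Nonempty {u : Fin d → ℝ // u ≠ 0} := ⟨⟨u₀, hu₀ne⟩⟩
  have hle : (⨅ u : {u : Fin d → ℝ // u ≠ 0},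
      (P {z | ∑ i, u.1 i * z i ≤ ∑ i, u.1 i * x i}).toReal) ≤ F (-S) := by
    have h0 : (P {z | ∑ i, u₀ i * z i ≤ ∑ i, u₀ i * x i}).toReal = F (-S) := by
      rw [hkey u₀ hu₀ne, hanorm, hdot, div_one]
    exact h0 ▸ ciInf_le hbb ⟨u₀, hu₀ne⟩
  exact le_antisymm hle (le_ciInf hbdd)
end
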